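/- Let Var={x_1,…,x_n} with n ≥ 1 and let β be a quantifier-free Boolean formula over Var. Then β is satisfiable (by some truth assignment to Var) if and only if K_SAT^Var ⊭ ¬β, i.e., there exists an initial track ρ of K_SAT^Var such that K_SAT^Var, ρ ⊨ β under the homogeneity semantics. -/

import Mathlib

open Classical

universe u v

structure KripkeStructure (AP : Type u) (W : Type v) where
  delta : W → W → Prop
  leftTotal : ∀ w, ∃ w', delta w w'
  mu : W → Set AP
  init : W

variable {AP : Type u} {W : Type v}

/-- A track over a Kripke structure: a finite sequence of at least two states
respecting the transition relation. -/
def IsTrack (K : KripkeStructure AP W) (ρ : List W) : Prop :=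
  2 ≤ ρ.length ∧ ρ.Chain' K.delta

/-- `σ` is a proper prefix (of length at least 2) of `ρ`, i.e. `σ ∈ Pref(ρ)`. -/
def ProperPrefix (σ ρ : List W) : Prop :=
  σ <+: ρ ∧ σ ≠ ρ ∧ 2 ≤ σ.length

/-- `σ` is a proper suffix (of length at least 2) of `ρ`, i.e. `σ ∈ Suff(ρ)`. -/
def ProperSuffix (σ ρ : List W) : Prop :=
  σ <:+ ρ ∧ σ ≠ ρ ∧ 2 ≤ σ.length

/-- Formulas of the HS fragment AĀBB̄Ē. -/
inductive HSFormula (AP : Type u) : Type u where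
  | prop (p : AP)
  | neg (φ : HSFormula AP)
  | and (φ ψ : HSFormula AP)
  | modA (φ : HSFormula AP)
  | modAbar (φ : HSFormula AP)
  | modB (φ : HSFormula AP)
  | modBbar (φ : HSFormula AP)
  | modEbar (φ : HSFormula AP)

/-- Satisfaction of an HS formula by a track, under the homogeneity assumption. -/
def sat (K : KripkeStructure AP W) : HSFormula AP → List W → Prop
  | .prop p, ρ => ∀ w ∈ ρ, p ∈ K.mu w
  | .neg φ, ρ => ¬ sat K φ ρ
  | .and φ ψ, ρ => sat K φ ρ ∧ sat K ψ ρ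
  | .modA φ, ρ => ∃ σ, IsTrack K σ ∧ σ.head? = ρ.getLast? ∧ sat K φ σ
  | .modAbar φ, ρ => ∃ σ, IsTrack K σ ∧ σ.getLast? = ρ.head? ∧ sat K φ σ
  | .modB φ, ρ => ∃ σ, ProperPrefix σ ρ ∧ sat K φ σ
  | .modBbar φ, ρ => ∃ σ, IsTrack K σ ∧ ProperPrefix ρ σ ∧ sat K φ σ
  | .modEbar φ, ρ => ∃ σ, IsTrack K σ ∧ ProperSuffix ρ σ ∧ sat K φ σ

/-- The B-nesting depth of an AĀBB̄Ē formula. -/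
def nestB : HSFormula AP → ℕ
  | .prop _ => 0
  | .neg φ => nestB φ
  | .and φ ψ => max (nestB φ) (nestB ψ)
  | .modA φ => nestB φ
  | .modAbar φ => nestB φ
  | .modB φ => 1 + nestB φ
  | .modBbar φ => nestB φ
  | .modEbar φ => nestB φ

/-- Quantifier-free Boolean formulas. -/
inductive BForm (V : Type u) : Type u where
  | var (x : V)
  | neg (φ : BForm V)
  | and (φ ψ : BForm V)
  | or (φ ψ : BForm V)

/-- Evaluation of a Boolean formula under a truth assignment. -/
def BForm.eval {V : Type u} (α : V → Bool) : BForm V → Bool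
  | .var x => α x
  | .neg φ => !(φ.eval α)
  | .and φ ψ => φ.eval α && ψ.eval α
  | .or φ ψ => φ.eval α || ψ.eval α

/-- The variables occurring in a Boolean formula. -/
def BForm.vars {V : Type u} : BForm V → Set V
  | .var x => {x}
  | .neg φ => φ.vars
  | .and φ ψ => φ.vars ∪ ψ.vars
  | .or φ ψ => φ.vars ∪ ψ.vars

/-- States of `K_SAT` for `n` variables: `w i b` is `w_(i+1)^b`. -/
inductive SState (n : ℕ) : Type where
  | w0
  | w (i : Fin n) (b : Bool)

/-- The transition relation of `K_SAT`. -/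
def sDelta (n : ℕ) : SState n → SState n → Prop
  | .w0, .w i _ => i.1 = 0
  | .w i b, .w i' b' => i'.1 = i.1 + 1 ∨ (i.1 = n - 1 ∧ i' = i ∧ b' = b)
  | _, _ => False

/-- The Kripke structure `K_SAT^Var` for variables `x_1, …, x_n` (`n ≥ 1`). -/
def KSAT (n : ℕ) (hn : 1 ≤ n) : KripkeStructure ℕ (SState n) where
  delta := sDelta n
  leftTotal := by
    intro st
    match st with
    | .w0 => exact ⟨.w ⟨0, hn⟩ true, rfl⟩
    | .w i b =>
      by_cases h : i.1 + 1 < n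
      · exact ⟨.w ⟨i.1 + 1, h⟩ true, Or.inl rfl⟩
      · exact ⟨.w i b, Or.inr ⟨by have := i.isLt; omega, rfl, rfl⟩⟩
  mu := fun st =>
    match st with
    | .w0 => {x | 1 ≤ x ∧ x ≤ n}
    | .w _ true => {x | 1 ≤ x ∧ x ≤ n}
    | .w i false => {x | (1 ≤ x ∧ x ≤ n) ∧ x ≠ i.1 + 1}
  init := .w0

/-- A quantifier-free Boolean formula over variables `ℕ` read as an HS formula. -/
def BForm.toHS : BForm ℕ → HSFormula ℕ
  | .var x => .prop x
  | .neg φ => .neg φ.toHS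
  | .and φ ψ => .and φ.toHS ψ.toHS
  | .or φ ψ => .neg (.and (.neg φ.toHS) (.neg ψ.toHS))

lemma eval_congr {V : Type u} (β : BForm V) (α α' : V → Bool)
    (h : ∀ x ∈ β.vars, α x = α' x) : β.eval α = β.eval α' := by
  induction β with
  | var x => exact h x rfl
  | neg φ ih => simp [BForm.eval, ih (fun x hx => h x hx)]
  | and φ ψ ihφ ihψ =>
    simp [BForm.eval, ihφ (fun x hx => h x (Or.inl hx)),
      ihψ (fun x hx => h x (Or.inr hx))]
  | or φ ψ ihφ ihψ =>
    simp [BForm.eval, ihφ (fun x hx => h x (Or.inl hx)),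
      ihψ (fun x hx => h x (Or.inr hx))]

lemma sat_iff_eval {n : ℕ} (hn : 1 ≤ n) (β : BForm ℕ) (ρ : List (SState n)) :
    sat (KSAT n hn) β.toHS ρ ↔
      β.eval (fun x => decide (∀ w ∈ ρ, x ∈ (KSAT n hn).mu w)) = true := by
  induction β with
  | var x => simp [sat, BForm.toHS, BForm.eval]
  | neg φ ih => simp [sat, BForm.toHS, BForm.eval, ih]
  | and φ ψ ihφ ihψ => simp [sat, BForm.toHS, BForm.eval, ihφ, ihψ]
  | or φ ψ ihφ ihψ =>
    simp only [sat, BForm.toHS, BForm.eval, ihφ, ihψ, Bool.or_eq_true]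
    tauto

/-- `β` is satisfiable iff `K_SAT^Var ⊭ ¬β`, i.e. iff some initial
track of `K_SAT^Var` satisfies `β` under the homogeneity semantics. -/
theorem sat_model_checking (n : ℕ) (hn : 1 ≤ n) (β : BForm ℕ)
    (hvars : ∀ x ∈ β.vars, 1 ≤ x ∧ x ≤ n) :
    (∃ α : ℕ → Bool, β.eval α = true) ↔
      ∃ ρ : List (SState n), IsTrack (KSAT n hn) ρ ∧ ρ.head? = some .w0 ∧
        sat (KSAT n hn) β.toHS ρ := by
  constructor
  · rintro ⟨α, hα⟩
    refine ⟨SState.w0 :: List.ofFn (fun i : Fin n => SState.w i (α (i.1 + 1))), ?_, rfl, ?_⟩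
    · constructor
      · simp; omega
      · rw [List.Chain', List.isChain_iff_getElem]
        intro k hk
        simp only [List.length_cons, List.length_ofFn] at hk
        rcases k with _ | k
        · have : (SState.w0 :: List.ofFn (fun i : Fin n => SState.w i (α (i.1 + 1)))).get
              ⟨1, by simp; omega⟩ = SState.w ⟨0, hn⟩ (α 1) := by
            simp [List.get_ofFn]
          simp only [List.get_eq_getElem] at this
          simp only [List.getElem_cons_zero, this]
          exact rfl
        · have h1 : ∀ h : k + 1 < (SState.w0 :: List.ofFn (fun i : Fin n => SState.w i (α (i.1 + 1)))).length,
              (SState.w0 :: List.ofFn (fun i : Fin n => SState.w i (α (i.1 + 1)))).get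
              ⟨k + 1, h⟩ = SState.w ⟨k, by omega⟩ (α (k + 1)) := fun h => by
            simp [List.get_ofFn]
          have h2 : ∀ h : k + 2 < (SState.w0 :: List.ofFn (fun i : Fin n => SState.w i (α (i.1 + 1)))).length,
              (SState.w0 :: List.ofFn (fun i : Fin n => SState.w i (α (i.1 + 1)))).get
              ⟨k + 2, h⟩ = SState.w ⟨k + 1, by omega⟩ (α (k + 2)) := fun h => by
            simp [List.get_ofFn]
          simp only [List.get_eq_getElem] at h1 h2
          rw [h1 (by simp; omega), h2 (by simp; omega)]
          exact Or.inl rfl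
    · rw [sat_iff_eval]
      rw [eval_congr β _ α ?_]
      · exact hα
      · intro x hx
        obtain ⟨hx1, hx2⟩ := hvars x hx
        by_cases hαx : α x = true
        · rw [hαx]
          simp only [decide_eq_true_eq, List.mem_cons, List.mem_ofFn]
          rintro w (rfl | ⟨i, rfl⟩)
          · exact ⟨hx1, hx2⟩
          · show x ∈ (KSAT n hn).mu (SState.w i (α (i.1 + 1)))
            rcases hb : α (i.1 + 1) with _ | _
            · exact ⟨⟨hx1, hx2⟩, fun hc => by rw [hc] at hαx; simp [hb] at hαx⟩
            · exact ⟨hx1, hx2⟩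
        · simp only [Bool.not_eq_true] at hαx
          rw [hαx]
          simp only [decide_eq_false_iff_not]
          intro hall
          have hmem : SState.w ⟨x - 1, by omega⟩ (α x) ∈
              SState.w0 :: List.ofFn (fun i : Fin n => SState.w i (α (i.1 + 1))) := by
            simp only [List.mem_cons, List.mem_ofFn]
            refine Or.inr ⟨⟨x - 1, by omega⟩, ?_⟩
            show SState.w _ (α (x - 1 + 1)) = _
            rw [show x - 1 + 1 = x by omega]
          have := hall _ hmem
          rw [hαx] at this
          have hne : x ≠ (x - 1) + 1 := this.2
          omega
  · rintro ⟨ρ, _, _, hsat⟩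
    refine ⟨fun x => decide (∀ w ∈ ρ, x ∈ (KSAT n hn).mu w), ?_⟩
    exact (sat_iff_eval hn β ρ).mp hsat
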